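/- Let Ω, κ ∈ ℝ with 0 < Ω² < 1/3, and set r = (1 + Ω² + √(8Ω²(1−Ω²)))/(1 − 3Ω²). Then r > 1, and a sequence u : ℕ → ℝ satisfies u(0) = 0 together with the recurrence (3Ω² − 1)·(u(m) + u(m+2)) + 2·(1+Ω²)·u(m+1) + 2κ = 0 for every m ∈ ℕ if and only if there exists α ∈ ℝ such that u(m) = α·(r^m − r^(−m)) − (κ/(4Ω²))·(1 − r^(−m)) for all m ∈ ℕ. Moreover, if in addition u(m) ≥ 0 for all m, then α ≥ 0. -/

import Mathlib

/-- formula for the general solution -/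
noncomputable def fml (r κ Ω α : ℝ) (m : ℕ) : ℝ :=
  α * (r ^ m - r ^ (-(m : ℤ))) - (κ / (4 * Ω ^ 2)) * (1 - r ^ (-(m : ℤ)))

lemma aux_rec (Ω κ A B C P r : ℝ)
    (key : (3*Ω^2 - 1) * (r^2 + 1) + 2*(1 + Ω^2) * r = 0)
    (hrr : r * r⁻¹ = 1)
    (hC : 8*Ω^2*C + 2*κ = 0) :
    (3*Ω^2 - 1) * ((A*P + B*P⁻¹ + C) + (A*(P*r*r) + B*(P*r*r)⁻¹ + C))
      + 2*(1 + Ω^2) * (A*(P*r) + B*(P*r)⁻¹ + C) + 2*κ = 0 := by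
  rw [mul_inv, mul_inv]
  linear_combination (A*P + B*(P⁻¹*r⁻¹*r⁻¹)) * key + hC
    - (B*P⁻¹*((3*Ω^2-1)*(r*r⁻¹+1) + 2*(1+Ω^2)*r⁻¹)) * hrr

theorem statement16 (Ω κ : ℝ) (h1 : 0 < Ω ^ 2) (h2 : Ω ^ 2 < 1 / 3)
    (r : ℝ) (hr : r = (1 + Ω ^ 2 + Real.sqrt (8 * Ω ^ 2 * (1 - Ω ^ 2))) / (1 - 3 * Ω ^ 2)) :
    1 < r ∧
    (∀ u : ℕ → ℝ,
      (u 0 = 0 ∧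
        ∀ m : ℕ, (3 * Ω ^ 2 - 1) * (u m + u (m + 2)) + 2 * (1 + Ω ^ 2) * u (m + 1)
          + 2 * κ = 0) ↔
      (∃ α : ℝ, ∀ m : ℕ,
        u m = α * (r ^ m - r ^ (-(m : ℤ))) - (κ / (4 * Ω ^ 2)) * (1 - r ^ (-(m : ℤ))))) ∧
    (∀ (u : ℕ → ℝ) (α : ℝ),
      u 0 = 0 →
      (∀ m : ℕ, (3 * Ω ^ 2 - 1) * (u m + u (m + 2)) + 2 * (1 + Ω ^ 2) * u (m + 1)
        + 2 * κ = 0) →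
      (∀ m : ℕ,
        u m = α * (r ^ m - r ^ (-(m : ℤ))) - (κ / (4 * Ω ^ 2)) * (1 - r ^ (-(m : ℤ)))) →
      (∀ m : ℕ, 0 ≤ u m) → 0 ≤ α) := by
  have hΩ2 : (Ω:ℝ)^2 ≠ 0 := ne_of_gt h1
  have hΩlt1 : Ω^2 < 1 := by linarith
  have hsnn : 0 ≤ Real.sqrt (8 * Ω ^ 2 * (1 - Ω ^ 2)) := Real.sqrt_nonneg _
  have hs2 : (Real.sqrt (8 * Ω ^ 2 * (1 - Ω ^ 2)))^2 = 8 * Ω^2 * (1 - Ω^2) :=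
    Real.sq_sqrt (by nlinarith)
  set s := Real.sqrt (8 * Ω ^ 2 * (1 - Ω ^ 2)) with hs_def
  have hd : 0 < 1 - 3*Ω^2 := by linarith
  have hrd : r * (1 - 3*Ω^2) = 1 + Ω^2 + s := by
    rw [hr]; exact div_mul_cancel₀ _ hd.ne'
  have hr1 : 1 < r := by nlinarith
  have hrpos : 0 < r := by linarith
  have hrne : r ≠ 0 := ne_of_gt hrpos
  have hrr : r * r⁻¹ = 1 := mul_inv_cancel₀ hrne
  have hrinvlt : r⁻¹ < 1 := by nlinarith
  have hrinvpos : 0 < r⁻¹ := inv_pos.mpr hrpos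
  have keyd : (1-3*Ω^2) * ((3*Ω^2 - 1)*(r^2+1) + 2*(1+Ω^2)*r) = 0 := by
    linear_combination (-((1-3*Ω^2)*r - (1+Ω^2) + s)) * hrd - hs2
  have key : (3*Ω^2 - 1) * (r^2 + 1) + 2*(1 + Ω^2) * r = 0 := by
    rcases mul_eq_zero.mp keyd with h | h
    · exact absurd h (ne_of_gt hd)
    · exact h
  have hz : ∀ k : ℕ, r ^ (-(k:ℤ)) = (r^k)⁻¹ := fun k => by
    rw [zpow_neg, zpow_natCast]
  have hC : 8*Ω^2*(-(κ/(4*Ω^2))) + 2*κ = 0 := by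
    rw [mul_neg, mul_div_assoc', mul_comm 8 (Ω^2), mul_assoc, mul_comm 4 (Ω^2), mul_div_mul_left _ _ hΩ2]; ring
  have frec : ∀ (α : ℝ) (m : ℕ),
      (3*Ω^2 - 1) * (fml r κ Ω α m + fml r κ Ω α (m+2))
        + 2*(1 + Ω^2) * (fml r κ Ω α (m+1)) + 2*κ = 0 := by
    intro α m
    simp only [fml]
    rw [hz m, hz (m+1), hz (m+2)]
    simp only [pow_succ]
    linear_combination aux_rec Ω κ α ((κ/(4*Ω^2)) - α) (-(κ/(4*Ω^2))) (r^m) r key hrr hC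
  refine ⟨hr1, ?_, ?_⟩
  · intro u
    constructor
    · rintro ⟨h0, hrec⟩
      set α := (u 1 + (κ/(4*Ω^2))*(1 - r⁻¹)) / (r - r⁻¹) with hα_def
      have hsub : r - r⁻¹ ≠ 0 := ne_of_gt (by linarith)
      have hne3 : (3*Ω^2 - 1) ≠ 0 := ne_of_lt (by linarith)
      have hf1 : u 1 = fml r κ Ω α 1 := by
        simp only [fml]
        rw [hz 1, pow_one, hα_def, div_mul_cancel₀ _ hsub]
        ring
      have H : ∀ m : ℕ, u m = fml r κ Ω α m ∧ u (m+1) = fml r κ Ω α (m+1) := by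
        intro m
        induction m with
        | zero =>
          refine ⟨?_, hf1⟩
          rw [h0]; simp [fml]
        | succ n ih =>
          refine ⟨ih.2, ?_⟩
          have h1' := hrec n
          have h2' := frec α n
          rw [ih.1, ih.2] at h1'
          exact mul_left_cancel₀ hne3 (by linear_combination h1' - h2')
      exact ⟨α, fun m => (H m).1⟩
    · rintro ⟨α, hα⟩
      constructor
      · rw [hα 0]; norm_num
      · intro m
        rw [hα m, hα (m+1), hα (m+2)]
        exact frec α m
  · intro u α h0 hrec hu hnn
    by_contra hcon
    push_neg at hcon
    set c' := κ / (4*Ω^2) with hc'_def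
    have hαne : α ≠ 0 := ne_of_lt hcon
    obtain ⟨m, hm⟩ := pow_unbounded_of_one_lt ((|c'| + 1)/(-α) + 1) hr1
    have h1m : (1:ℝ) ≤ r^m := one_le_pow₀ hr1.le
    have hQ0 : 0 < (r^m)⁻¹ := inv_pos.mpr (by linarith)
    have hQ1 : (r^m)⁻¹ ≤ 1 := by
      rw [inv_le_one_iff₀]; right; exact h1m
    have hb : 0 < (|c'| + 1)/(-α) := div_pos (by positivity) (by linarith)
    have h := hnn m
    rw [hu m, hz m] at h
    have hstep1 : α*(r^m - (r^m)⁻¹) ≤ α*(r^m - 1) :=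
      mul_le_mul_of_nonpos_left (by linarith) hcon.le
    have hstep2 : α*(r^m - 1) < α * ((|c'| + 1)/(-α)) :=
      mul_lt_mul_of_neg_left (by linarith) hcon
    have hstep3 : α * ((|c'| + 1)/(-α)) = -(|c'| + 1) := by
      rw [mul_comm, div_neg, neg_mul, div_mul_cancel₀ _ hαne]
    have hc'bound : -|c'| ≤ c' * (1 - (r^m)⁻¹) := by
      nlinarith [mul_nonneg (by linarith [neg_abs_le c'] : (0:ℝ) ≤ |c'| + c')
        (by linarith : (0:ℝ) ≤ 1 - (r^m)⁻¹), mul_nonneg (abs_nonneg c') hQ0.le]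
    linarith
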